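/- Let g and k be finite-dimensional Lie algebras, ψ: g → k a Lie algebra homomorphism, and N a k-module (hence a g-module via ψ). Let (f_i) be a basis of k with dual basis (f^i), and let R = Σ_i R^i ⊗ f_i ∈ End(N) ⊗ k be g-invariant for the natural g-action. Set V(R) = Σ_i R^i ∘ L^N(f_i) ∈ End(N) and ι(R) = Σ_i R^i ⊗ ι(f_i) acting on the Chevalley–Eilenberg complex C(k,N) = N ⊗ Λk*. Then as maps C(k,N) → C(g,N): (V(R) ⊗ ψ*) = (1 ⊗ ψ*) ∘ [d, ι(R)], where d is the Chevalley–Eilenberg differential on C(k,N) and ψ*: Λk* → Λg* is the pullback. In particular, the chain map V(R) ⊗ ψ* is chain homotopic to zero. -/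

import Mathlib

noncomputable section
open scoped TensorProduct

/-- The Chevalley–Eilenberg differential on (alternating) cochains with values in a module,
written on raw cochains: for `ω ∈ C^p(h,V)` and `v : Fin (p+1) → h`,
`(dω)(v) = Σ_i (−1)^i ρ(v_i) ω(…v̂_i…) + Σ_{i<j} (−1)^{i+j} ω([v_i,v_j], …v̂_i…v̂_j…)`
(the second sum is written with the bracket inserted in slot `i`, which for alternating
`ω` produces the sign `(−1)^j`).  The bracket and the module action are parameters. -/
def ceDa {hh V : Type*} [AddCommGroup V] [Module ℝ V]
    (brkt : hh → hh → hh) (ρ : hh → V → V) {p : ℕ}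
    (ω : (Fin p → hh) → V) : (Fin (p + 1) → hh) → V :=
  fun v =>
    (∑ i : Fin (p + 1), ((-1 : ℤ) ^ (i : ℕ)) • ρ (v i) (ω (i.removeNth v))) +
    ∑ i : Fin (p + 1), ∑ j : Fin (p + 1),
      if hij : (i : ℕ) < (j : ℕ) then
        ((-1 : ℤ) ^ (j : ℕ)) •
          ω (Function.update (j.removeNth v)
              (i.castLT (lt_of_lt_of_le hij (Nat.lt_succ_iff.mp j.isLt)))
              (brkt (v i) (v j)))
      else 0

/-- The contraction `ι(R) = Σ_i R^i ⊗ ι(f_i)` on raw cochains. -/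
def ceIota {hh V ι' : Type*} [Fintype ι'] [AddCommGroup V] [Module ℝ V]
    (R : ι' → (V →ₗ[ℝ] V)) (f : ι' → hh) {p : ℕ}
    (ω : (Fin (p + 1) → hh) → V) : (Fin p → hh) → V :=
  fun v => ∑ i, R i (ω (Fin.cons (f i) v))

/- ### Auxiliary lemmas -/

lemma removeNth_cons_succ {α : Type*} {n : ℕ} (x : α) (v : Fin (n+1) → α) (m : Fin (n+1)) :
    Fin.removeNth (α := fun _ => α) m.succ (Fin.cons x v)
      = Fin.cons x (Fin.removeNth (α := fun _ => α) m v) := by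
  funext j
  cases j using Fin.cases with
  | zero => simp [Fin.removeNth]
  | succ j => simp [Fin.removeNth]

lemma castLT_zero' {n m : ℕ} (h : ((0:Fin (m+1)):ℕ) < n+1) :
    Fin.castLT (0:Fin (m+1)) h = 0 := by
  ext; simp

lemma castLT_succ' {n m : ℕ} (i : Fin (m+1)) (h : (i.succ : ℕ) < n+1) :
    Fin.castLT i.succ h
      = (Fin.castLT i (by simpa using Nat.lt_of_succ_lt_succ (by simpa [Fin.val_succ] using h))).succ := by
  ext; simp

/-- Expansion of the Chevalley–Eilenberg differential on a tuple with a distinguished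
first entry. -/
lemma ceDa_cons {hh V : Type*} [AddCommGroup V] [Module ℝ V]
    (brkt : hh → hh → hh) (ρ : hh → V → V) {p : ℕ}
    (ω : (Fin (p+1) → hh) → V) (x : hh) (v : Fin (p+1) → hh) :
    ceDa brkt ρ ω (Fin.cons x v)
    = ρ x (ω v)
      + ∑ m : Fin (p+1), ((-1:ℤ)^((m:ℕ)+1)) • ρ (v m) (ω (Fin.cons x (Fin.removeNth m v)))
      + ∑ j : Fin (p+1), ((-1:ℤ)^((j:ℕ)+1)) • ω (Fin.cons (brkt x (v j)) (Fin.removeNth j v))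
      + ∑ m : Fin (p+1), ∑ j : Fin (p+1),
          (if hij : (m:ℕ) < (j:ℕ) then
            ((-1:ℤ)^((j:ℕ)+1)) • ω (Fin.cons x (Function.update (Fin.removeNth j v)
                (m.castLT (lt_of_lt_of_le hij (Nat.lt_succ_iff.mp j.isLt)))
                (brkt (v m) (v j))))
          else 0) := by
  unfold ceDa
  have h1 : (∑ i : Fin (p+2), ((-1:ℤ)^(i:ℕ)) • ρ (Fin.cons (α := fun _ => hh) x v i)
        (ω (Fin.removeNth (α := fun _ => hh) i (Fin.cons x v))))
      = ρ x (ω v) + ∑ m : Fin (p+1), ((-1:ℤ)^((m:ℕ)+1)) • ρ (v m) (ω (Fin.cons x (Fin.removeNth m v))) := by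
    rw [Fin.sum_univ_succ]
    simp [removeNth_cons_succ, Fin.removeNth_zero]
  have h2 : (∑ i : Fin (p+2), ∑ j : Fin (p+2),
      if hij : (i : ℕ) < (j : ℕ) then
        ((-1 : ℤ) ^ (j : ℕ)) •
          ω (Function.update (Fin.removeNth (α := fun _ => hh) j (Fin.cons x v))
              (i.castLT (lt_of_lt_of_le hij (Nat.lt_succ_iff.mp j.isLt)))
              (brkt (Fin.cons (α := fun _ => hh) x v i) (Fin.cons (α := fun _ => hh) x v j)))
      else 0)
      = (∑ j : Fin (p+1), ((-1:ℤ)^((j:ℕ)+1)) • ω (Fin.cons (brkt x (v j)) (Fin.removeNth j v)))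
        + ∑ m : Fin (p+1), ∑ j : Fin (p+1),
          (if hij : (m:ℕ) < (j:ℕ) then
            ((-1:ℤ)^((j:ℕ)+1)) • ω (Fin.cons x (Function.update (Fin.removeNth j v)
                (m.castLT (lt_of_lt_of_le hij (Nat.lt_succ_iff.mp j.isLt)))
                (brkt (v m) (v j))))
          else 0) := by
    rw [Fin.sum_univ_succ]
    congr 1
    · rw [Fin.sum_univ_succ]
      simp only [Fin.val_zero, Fin.val_succ, Nat.lt_irrefl, dif_neg, not_lt, Nat.zero_le,
        Nat.succ_pos, dif_pos, Fin.cons_zero, Fin.cons_succ, zero_add]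
      rw [dif_neg not_false, zero_add]
      apply Finset.sum_congr rfl
      intro j _
      rw [removeNth_cons_succ, castLT_zero', Fin.update_cons_zero]
    · apply Finset.sum_congr rfl
      intro m _
      rw [Fin.sum_univ_succ]
      simp only [Fin.val_succ, Fin.val_zero, Nat.not_lt_zero, dif_neg, not_false_iff, zero_add,
        Nat.add_lt_add_iff_right, Fin.cons_succ]
      apply Finset.sum_congr rfl
      intro j _
      by_cases h : (m:ℕ) < (j:ℕ)
      · rw [dif_pos h, dif_pos h, removeNth_cons_succ, castLT_succ', ← Fin.cons_update]
      · rw [dif_neg h, dif_neg h]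
  rw [h1, h2]
  abel

/-- A convenient regrouping fact in an additive commutative group. -/
private lemma regroup {N : Type*} [AddCommGroup N]
    (L SA D1 SB SC D2 : N) (h1 : SA + (SB + SC) = 0) (h2 : D1 + D2 = 0) :
    L = (SA + D1) + (((L + SB) + SC) + D2) := by
  have : (SA + D1) + (((L + SB) + SC) + D2) = L + ((SA + (SB + SC)) + (D1 + D2)) := by abel
  rw [this, h1, h2, add_zero, add_zero]

/-- The homotopy formula in Lie algebra cohomology: for a Lie algebra homomorphism
`ψ : g → k`, a `k`-module `N`, and a `g`-invariant element `R = Σ_i R^i ⊗ f_i ∈ End(N) ⊗ k`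
(written w.r.t. a basis `b` of `k`), the chain map `V(R) ⊗ ψ*` with
`V(R) = Σ_i R^i ∘ L^N(f_i)` satisfies `V(R) ⊗ ψ* = (1 ⊗ ψ*) ∘ [d, ι(R)]`; in particular it
is chain homotopic to zero.  Stated on an alternating cochain `ω ∈ C^{p+1}(k,N)` evaluated
on `ψ∘ξ`. -/
theorem stmt8 {g k N : Type*}
    [LieRing g] [LieAlgebra ℝ g] [LieRing k] [LieAlgebra ℝ k]
    [AddCommGroup N] [Module ℝ N] [LieRingModule k N] [LieModule ℝ k N]
    {ι' : Type*} [Fintype ι'] [DecidableEq ι']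
    (b : Module.Basis ι' ℝ k)
    (ψ : g →ₗ⁅ℝ⁆ k)
    (R : ι' → Module.End ℝ N)
    (hinv : ∀ ξ : g,
      ((∑ i, ⁅LieModule.toEnd ℝ k N (ψ ξ), R i⁆ ⊗ₜ[ℝ] b i)
          + ∑ i, R i ⊗ₜ[ℝ] ⁅ψ ξ, b i⁆)
        = (0 : Module.End ℝ N ⊗[ℝ] k))
    {p : ℕ} (ω : AlternatingMap ℝ k N (Fin (p + 1)))
    (ξ : Fin (p + 1) → g) :
    (∑ i, R i ⁅b i, ω fun r => ψ (ξ r)⁆)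
      = ceDa (fun u v => ⁅u, v⁆) (fun u n => ⁅u, n⁆)
          (ceIota R (fun i => b i) ⇑ω) (fun r => ψ (ξ r))
        + ceIota R (fun i => b i) (ceDa (fun u v => ⁅u, v⁆) (fun u n => ⁅u, n⁆) ⇑ω)
            (fun r => ψ (ξ r)) := by
  classical
  set η : Fin (p+1) → k := fun r => ψ (ξ r) with hη
  -- the key consequence of `g`-invariance of `R`
  have key : ∀ (v : Fin p → k) (m : Fin (p+1)),
      ((∑ i, ⁅η m, R i (ω (Fin.cons (b i) v))⁆) - ∑ i, R i ⁅η m, ω (Fin.cons (b i) v)⁆)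
        + ∑ i, R i (ω (Fin.cons ⁅η m, b i⁆ v)) = 0 := by
    intro v m
    let L1 : k →ₗ[ℝ] N :=
      { toFun := fun x => ω (Fin.cons x v)
        map_add' := fun x y => ω.toMultilinearMap.cons_add v x y
        map_smul' := fun c x => ω.toMultilinearMap.cons_smul v c x }
    let Φ : (Module.End ℝ N ⊗[ℝ] k) →ₗ[ℝ] N :=
      TensorProduct.lift
        { toFun := fun A => A ∘ₗ L1
          map_add' := by intro A B; ext x; simp
          map_smul' := by intro c A; ext x; simp }
    have h := congrArg Φ (hinv (ξ m))
    simp only [map_add, map_sum, map_zero, Φ, TensorProduct.lift.tmul] at h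
    simp only [LinearMap.coe_mk, AddHom.coe_mk, LinearMap.comp_apply] at h
    have hb : ∀ i : ι', (⁅LieModule.toEnd ℝ k N (ψ (ξ m)), R i⁆ : Module.End ℝ N) (L1 (b i))
        = ⁅ψ (ξ m), R i (L1 (b i))⁆ - R i ⁅ψ (ξ m), L1 (b i)⁆ := by
      intro i
      rw [LieRing.of_associative_ring_bracket]
      simp [LieModule.toEnd_apply_apply]
    rw [Finset.sum_congr rfl (fun i _ => hb i)] at h
    rw [Finset.sum_sub_distrib] at h
    simpa [L1, hη] using h
  -- expansion of the second summand
  have e2 : ceIota R (fun i => b i) (ceDa (fun u v => ⁅u, v⁆) (fun u n => ⁅u, n⁆) ⇑ω) η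
      = (∑ i, R i ⁅b i, ω η⁆)
        + (∑ m : Fin (p+1), ((-1:ℤ)^((m:ℕ)+1)) •
            ∑ i, R i ⁅η m, ω (Fin.cons (b i) (Fin.removeNth m η))⁆)
        + (∑ m : Fin (p+1), ((-1:ℤ)^((m:ℕ)+1)) •
            ∑ i, R i (ω (Fin.cons ⁅b i, η m⁆ (Fin.removeNth m η))))
        + (∑ m : Fin (p+1), ∑ j : Fin (p+1),
            if hij : (m:ℕ) < (j:ℕ) then
              ((-1:ℤ)^((j:ℕ)+1)) •
                ∑ i, R i (ω (Fin.cons (b i) (Function.update (Fin.removeNth j η)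
                  (m.castLT (lt_of_lt_of_le hij (Nat.lt_succ_iff.mp j.isLt)))
                  ⁅η m, η j⁆)))
            else 0) := by
    show (∑ i, R i ((ceDa (fun u v => ⁅u, v⁆) (fun u n => ⁅u, n⁆) ⇑ω) (Fin.cons (b i) η))) = _
    simp only [ceDa_cons]
    simp only [map_add, map_sum, map_zsmul, apply_dite (R _), map_zero]
    rw [Finset.sum_add_distrib, Finset.sum_add_distrib, Finset.sum_add_distrib]
    congr 1
    congr 1
    congr 1
    · rw [Finset.sum_comm]
      exact Finset.sum_congr rfl fun m _ => (Finset.smul_sum).symm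
    · rw [Finset.sum_comm]
      exact Finset.sum_congr rfl fun m _ => (Finset.smul_sum).symm
    · rw [Finset.sum_comm]
      refine Finset.sum_congr rfl fun m _ => ?_
      rw [Finset.sum_comm]
      refine Finset.sum_congr rfl fun j _ => ?_
      by_cases h : (m:ℕ) < (j:ℕ)
      · simp only [dif_pos h, Finset.smul_sum]
      · simp only [dif_neg h, Finset.sum_const_zero]
  have lie_sum : ∀ (x : k) (f : ι' → N), ⁅x, ∑ i, f i⁆ = ∑ i, ⁅x, f i⁆ := by
    intro x f
    exact map_sum (LieModule.toEnd ℝ k N x) f Finset.univ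
  rw [e2]
  simp only [ceDa, ceIota]
  refine regroup _ _ _ _ _ _ ?_ ?_
  · -- the single sums cancel by invariance
    rw [← Finset.sum_add_distrib, ← Finset.sum_add_distrib]
    refine Finset.sum_eq_zero fun m _ => ?_
    have hc : (∑ i, R i (ω (Fin.cons ⁅b i, η m⁆ (Fin.removeNth m η))))
        = - ∑ i, R i (ω (Fin.cons ⁅η m, b i⁆ (Fin.removeNth m η))) := by
      rw [← Finset.sum_neg_distrib]
      refine Finset.sum_congr rfl fun i _ => ?_
      rw [← map_neg]
      congr 1
      have hskew : ⁅b i, η m⁆ = ((-1:ℝ) • ⁅η m, b i⁆ : k) := by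
        rw [neg_one_smul, ← lie_skew]
      rw [hskew]
      have := ω.toMultilinearMap.cons_smul (Fin.removeNth m η) (-1 : ℝ) ⁅η m, b i⁆
      simpa [neg_one_smul] using this
    rw [hc]
    have h2 : ((-1:ℤ)^((m:ℕ)+1)) = -((-1:ℤ)^((m:ℕ))) := by ring
    rw [h2, neg_smul, neg_smul, smul_neg, neg_neg]
    rw [← smul_neg, ← smul_add, ← smul_add]
    have h3 : (∑ i, ⁅η m, R i (ω (Fin.cons (b i) (Fin.removeNth m η)))⁆)
          + (-(∑ i, R i ⁅η m, ω (Fin.cons (b i) (Fin.removeNth m η))⁆)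
            + ∑ i, R i (ω (Fin.cons ⁅η m, b i⁆ (Fin.removeNth m η))))
        = ((∑ i, ⁅η m, R i (ω (Fin.cons (b i) (Fin.removeNth m η)))⁆)
            - ∑ i, R i ⁅η m, ω (Fin.cons (b i) (Fin.removeNth m η))⁆)
          + ∑ i, R i (ω (Fin.cons ⁅η m, b i⁆ (Fin.removeNth m η))) := by abel
    rw [lie_sum (η m), h3, key (Fin.removeNth m η) m, smul_zero]
  · -- the double sums cancel
    rw [← Finset.sum_add_distrib]
    refine Finset.sum_eq_zero fun m _ => ?_
    rw [← Finset.sum_add_distrib]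
    refine Finset.sum_eq_zero fun j _ => ?_
    by_cases h : (m:ℕ) < (j:ℕ)
    · rw [dif_pos h, dif_pos h, pow_succ, mul_neg_one, neg_smul, add_neg_cancel]
    · rw [dif_neg h, dif_neg h, add_zero]
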